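/- Let d ≥ 1 be an integer and define c_n(z,u) = exp(−i·√n·Im(u·z)) for z, u ∈ ℂ^d (a unimodular number). Then for every z ∈ ℂ^d with |z| < 1 and all u, v ∈ ℂ^d: lim_{n→∞} c_n(z,u)·conj(c_n(z,v))·K_n(√n·z + u, √n·z + v) = π^{−d}·exp( u·v − (|u|² + |v|²)/2 ), and the convergence is uniform on compact subsets of {z ∈ ℂ^d : |z| < 1} × ℂ^d × ℂ^d. (Thus in the bulk the τ = 0 model exhibits the higher dimensional Ginibre kernel as scaling limit, up to unimodular cocycle factors.) -/

import Mathlib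

open scoped BigOperators Real
open ComplexConjugate Filter

noncomputable def dotC {d : ℕ} (z w : Fin d → ℂ) : ℂ := ∑ k, z k * conj (w k)

noncomputable def normSqC {d : ℕ} (z : Fin d → ℂ) : ℝ := ∑ k, Complex.normSq (z k)

def multiIdx (d n : ℕ) : Finset (Fin d → ℕ) :=
  (Fintype.piFinset fun _ : Fin d => Finset.range n).filter fun j => (∑ k, j k) < n

/-- The higher dimensional Ginibre-type kernel at `τ = 0`. -/
noncomputable def K0 (d n : ℕ) (z w : Fin d → ℂ) : ℂ :=
  ((Real.pi : ℂ))⁻¹ ^ d * Complex.exp (-(((normSqC z + normSqC w : ℝ)) : ℂ) / 2) *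
    ∑ j ∈ multiIdx d n, ∏ k, (z k * conj (w k)) ^ (j k) / (Nat.factorial (j k) : ℂ)

/-- The unimodular cocycle `c_n(z,u) = exp(-i √n Im(u·z))` for the `τ = 0` model. -/
noncomputable def cUni0 (d : ℕ) (n : ℕ) (z u : Fin d → ℂ) : ℂ :=
  Complex.exp (-(Complex.I * ((Real.sqrt n : ℝ) : ℂ) * (((dotC u z).im : ℝ) : ℂ)))

/-! ### Auxiliary lemmas -/

lemma multiIdx_eq (d n : ℕ) :
    multiIdx d n = (Finset.range n).biUnion (fun m => Finset.piAntidiag Finset.univ m) := by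
  ext j
  simp only [multiIdx, Finset.mem_filter, Fintype.mem_piFinset, Finset.mem_range,
    Finset.mem_biUnion, Finset.mem_piAntidiag]
  constructor
  · rintro ⟨h1, h2⟩
    exact ⟨_, h2, rfl, fun i _ => Finset.mem_univ i⟩
  · rintro ⟨m, hm, rfl, -⟩
    refine ⟨fun k => lt_of_le_of_lt ?_ hm, hm⟩
    exact Finset.single_le_sum (f := j) (fun i _ => Nat.zero_le _) (Finset.mem_univ k)

lemma multi_sum (d n : ℕ) (c : Fin d → ℂ) :
    ∑ j ∈ multiIdx d n, ∏ k, c k ^ (j k) / (Nat.factorial (j k) : ℂ)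
      = ∑ m ∈ Finset.range n, (∑ k, c k) ^ m / (Nat.factorial m : ℂ) := by
  rw [multiIdx_eq, Finset.sum_biUnion]
  · refine Finset.sum_congr rfl fun m _ => ?_
    rw [Finset.sum_pow_eq_sum_piAntidiag, Finset.sum_div]
    refine Finset.sum_congr rfl fun j hj => ?_
    rw [Finset.mem_piAntidiag] at hj
    have hspec : ((∏ k, Nat.factorial (j k) : ℕ) : ℂ) * (Nat.multinomial Finset.univ j : ℂ)
        = (Nat.factorial m : ℂ) := by
      rw [← Nat.cast_mul, Nat.multinomial_spec, hj.1]
    have h1 : (∏ k, (Nat.factorial (j k) : ℂ)) ≠ 0 := by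
      refine Finset.prod_ne_zero_iff.2 fun k _ => ?_
      exact_mod_cast (Nat.factorial_pos _).ne'
    have h2 : (Nat.factorial m : ℂ) ≠ 0 := by exact_mod_cast (Nat.factorial_pos m).ne'
    rw [Finset.prod_div_distrib]
    push_cast at hspec ⊢
    field_simp
    linear_combination (-(∏ k, c k ^ j k)) * hspec
  · intro a ha b hb hab
    simp only [Finset.disjoint_left, Finset.mem_coe, Finset.mem_piAntidiag]
    rintro j ⟨rfl, -⟩ ⟨h, -⟩
    exact hab h

lemma normSqC_eq {d : ℕ} (x : Fin d → ℂ) : ((normSqC x : ℝ) : ℂ) = dotC x x := by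
  simp [normSqC, dotC, Complex.mul_conj]

lemma normSqC_nonneg {d : ℕ} (x : Fin d → ℂ) : 0 ≤ normSqC x :=
  Finset.sum_nonneg fun _ _ => Complex.normSq_nonneg _

lemma dotC_conj {d : ℕ} (z w : Fin d → ℂ) : conj (dotC w z) = dotC z w := by
  simp [dotC, map_sum, map_mul, mul_comm]

lemma dotC_expand {d : ℕ} (S : ℝ) (z u v : Fin d → ℂ) :
    dotC (fun k => (S:ℂ) * z k + u k) (fun k => (S:ℂ) * z k + v k)
      = (S:ℂ)^2 * dotC z z + (S:ℂ) * conj (dotC v z) + (S:ℂ) * dotC u z + dotC u v := by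
  rw [dotC_conj]
  have h : ∀ k, ((S:ℂ)*z k+u k)*conj ((S:ℂ)*z k+v k)
      = (S:ℂ)^2*(z k*conj (z k)) + (S:ℂ)*(z k*conj (v k)) + (S:ℂ)*(u k*conj (z k))
        + u k*conj (v k) := by
    intro k
    simp only [map_add, map_mul, Complex.conj_ofReal]
    ring
  simp only [dotC, h, Finset.sum_add_distrib, Finset.mul_sum]

lemma cocycle_exp {d : ℕ} (S : ℝ) (z u v : Fin d → ℂ) :
    Complex.exp (-(Complex.I * (S:ℂ) * (((dotC u z).im : ℝ) : ℂ)))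
      * conj (Complex.exp (-(Complex.I * (S:ℂ) * (((dotC v z).im : ℝ) : ℂ))))
      * Complex.exp (-(((normSqC (fun k => (S:ℂ) * z k + u k)
          + normSqC (fun k => (S:ℂ) * z k + v k) : ℝ)) : ℂ) / 2)
    = Complex.exp ((dotC u v - (((normSqC u + normSqC v : ℝ)) : ℂ) / 2)
        - dotC (fun k => (S:ℂ) * z k + u k) (fun k => (S:ℂ) * z k + v k)) := by
  rw [← Complex.exp_conj, ← Complex.exp_add, ← Complex.exp_add]
  congr 1
  have hab := dotC_expand S z u v
  have hP := Complex.sub_conj (dotC u z)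
  have hQ := Complex.sub_conj (dotC v z)
  have hcast1 : (((normSqC (fun k => (S:ℂ) * z k + u k)
      + normSqC (fun k => (S:ℂ) * z k + v k) : ℝ)) : ℂ)
      = ((S:ℂ)^2 * dotC z z + (S:ℂ) * conj (dotC u z) + (S:ℂ) * dotC u z + dotC u u)
        + ((S:ℂ)^2 * dotC z z + (S:ℂ) * conj (dotC v z) + (S:ℂ) * dotC v z + dotC v v) := by
    push_cast [normSqC_eq]
    rw [dotC_expand S z u u, dotC_expand S z v v]
  have hcast2 : (((normSqC u + normSqC v : ℝ)) : ℂ) = dotC u u + dotC v v := by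
    push_cast [normSqC_eq]
    ring
  have hconj : conj (-(Complex.I * (S:ℂ) * (((dotC v z).im : ℝ) : ℂ)))
      = Complex.I * (S:ℂ) * (((dotC v z).im : ℝ) : ℂ) := by
    simp [map_mul, Complex.conj_I, Complex.conj_ofReal]
  rw [hconj, hcast1, hcast2, hab]
  push_cast at hP hQ ⊢
  linear_combination ((S:ℂ)/2) * hP - ((S:ℂ)/2) * hQ

lemma exp_partial_tail (w : ℂ) (n : ℕ) :
    Complex.exp w - ∑ m ∈ Finset.range n, w ^ m / (Nat.factorial m : ℂ)
      = ∑' k : ℕ, w ^ (k + n) / (Nat.factorial (k + n) : ℂ) := by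
  have hs : Summable (fun m : ℕ => w ^ m / (Nat.factorial m : ℂ)) :=
    NormedSpace.expSeries_div_summable w
  have h := Summable.sum_add_tsum_nat_add (f := fun m : ℕ => w ^ m / (Nat.factorial m : ℂ)) n hs
  have hexp : Complex.exp w = ∑' m : ℕ, w ^ m / (Nat.factorial m : ℂ) := by
    rw [Complex.exp_eq_exp_ℂ, NormedSpace.exp_eq_tsum_div]
  rw [hexp, ← h]
  ring

lemma real_exp_tsum (x : ℝ) : Real.exp x = ∑' m : ℕ, x ^ m / (Nat.factorial m : ℝ) := by
  rw [Real.exp_eq_exp_ℝ, NormedSpace.exp_eq_tsum_div]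

lemma tail_le (r θ : ℝ) (hr : 0 ≤ r) (hθ : 0 < θ) (hθ1 : θ ≤ 1) (n : ℕ) :
    ∑' k : ℕ, r ^ (k + n) / (Nat.factorial (k + n) : ℝ)
      ≤ θ ^ n * Real.exp (r / θ) := by
  have hs : Summable (fun m : ℕ => (r/θ) ^ m / (Nat.factorial m : ℝ)) :=
    NormedSpace.expSeries_div_summable (r/θ)
  have hs2 : Summable (fun k : ℕ => (r/θ) ^ (k + n) / (Nat.factorial (k + n) : ℝ)) :=
    (summable_nat_add_iff n).2 hs
  have hterm : ∀ k : ℕ, r ^ (k+n) / (Nat.factorial (k+n) : ℝ)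
      ≤ θ ^ n * ((r/θ)^(k+n) / (Nat.factorial (k+n) : ℝ)) := by
    intro k
    have h1 : r ^ (k+n) = θ ^ (k+n) * (r/θ)^(k+n) := by
      rw [← mul_pow, mul_div_cancel₀ _ hθ.ne']
    rw [h1]
    have h2 : θ ^ (k+n) ≤ θ ^ n := pow_le_pow_of_le_one hθ.le hθ1 (Nat.le_add_left n k)
    have h3 : (0:ℝ) ≤ (r/θ)^(k+n) / (Nat.factorial (k+n) : ℝ) := by positivity
    calc θ ^ (k+n) * (r/θ)^(k+n) / (Nat.factorial (k+n) : ℝ)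
        = θ ^ (k+n) * ((r/θ)^(k+n) / (Nat.factorial (k+n) : ℝ)) := by ring
      _ ≤ θ ^ n * ((r/θ)^(k+n) / (Nat.factorial (k+n) : ℝ)) :=
          mul_le_mul_of_nonneg_right h2 h3
  have step1 : ∑' k : ℕ, r ^ (k + n) / (Nat.factorial (k + n) : ℝ)
      ≤ ∑' k : ℕ, θ ^ n * ((r/θ) ^ (k + n) / (Nat.factorial (k + n) : ℝ)) := by
    refine Summable.tsum_le_tsum hterm ?_ (hs2.mul_left _)
    exact Summable.of_nonneg_of_le (fun k => by positivity) hterm (hs2.mul_left (θ^n))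
  have step2 : ∑' k : ℕ, (r/θ) ^ (k + n) / (Nat.factorial (k + n) : ℝ) ≤ Real.exp (r/θ) := by
    have h := Summable.sum_add_tsum_nat_add (f := fun m : ℕ => (r/θ) ^ m / (Nat.factorial m : ℝ)) n hs
    have hnn : 0 ≤ ∑ m ∈ Finset.range n, (r/θ) ^ m / (Nat.factorial m : ℝ) :=
      Finset.sum_nonneg fun m _ => by positivity
    rw [real_exp_tsum, ← h]
    linarith
  calc ∑' k : ℕ, r ^ (k + n) / (Nat.factorial (k + n) : ℝ)
      ≤ ∑' k : ℕ, θ ^ n * ((r/θ) ^ (k + n) / (Nat.factorial (k + n) : ℝ)) := step1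
    _ = θ ^ n * ∑' k : ℕ, (r/θ) ^ (k + n) / (Nat.factorial (k + n) : ℝ) := tsum_mul_left
    _ ≤ θ ^ n * Real.exp (r/θ) := mul_le_mul_of_nonneg_left step2 (by positivity)

lemma E_bound (w : ℂ) (θ : ℝ) (hθ : 0 < θ) (hθ1 : θ ≤ 1) (n : ℕ) :
    ‖Complex.exp (-w) * (∑ m ∈ Finset.range n, w ^ m / (Nat.factorial m : ℂ)) - 1‖
      ≤ Real.exp (‖w‖ / θ - w.re) * θ ^ n := by
  have key : Complex.exp (-w) * (∑ m ∈ Finset.range n, w ^ m / (Nat.factorial m : ℂ)) - 1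
      = -(Complex.exp (-w) * (Complex.exp w
          - ∑ m ∈ Finset.range n, w ^ m / (Nat.factorial m : ℂ))) := by
    rw [mul_sub, ← Complex.exp_add]
    ring_nf
    simp
    ring
  rw [key, norm_neg, norm_mul, exp_partial_tail]
  have h1 : ‖Complex.exp (-w)‖ = Real.exp (-w.re) := by
    rw [Complex.norm_exp]
    simp
  have h2 : ‖∑' k : ℕ, w ^ (k + n) / (Nat.factorial (k + n) : ℂ)‖
      ≤ ∑' k : ℕ, ‖w‖ ^ (k + n) / (Nat.factorial (k + n) : ℝ) := by
    refine (norm_tsum_le_tsum_norm ?_).trans_eq ?_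
    · have hsum : Summable (fun k : ℕ => ‖w‖ ^ (k + n) / (Nat.factorial (k + n) : ℝ)) :=
        (summable_nat_add_iff n).2 (NormedSpace.expSeries_div_summable (‖w‖ : ℝ))
      refine hsum.congr fun k => ?_
      rw [norm_div, norm_pow, Complex.norm_natCast]
    · refine tsum_congr fun k => ?_
      rw [norm_div, norm_pow, Complex.norm_natCast]
  have h3 := tail_le ‖w‖ θ (norm_nonneg w) hθ hθ1 n
  calc ‖Complex.exp (-w)‖ * ‖∑' k : ℕ, w ^ (k + n) / (Nat.factorial (k + n) : ℂ)‖
      ≤ Real.exp (-w.re) * (θ ^ n * Real.exp (‖w‖/θ)) := by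
        rw [h1]; exact mul_le_mul_of_nonneg_left (h2.trans h3) (Real.exp_pos _).le
    _ = Real.exp (‖w‖ / θ - w.re) * θ ^ n := by
        rw [Real.exp_sub, Real.exp_neg]
        field_simp

lemma dotC_norm_le {d : ℕ} {x y : Fin d → ℂ} {R : ℝ} (hx : ‖x‖ ≤ R) (hy : ‖y‖ ≤ R)
    (hR : 0 ≤ R) : ‖dotC x y‖ ≤ d * R^2 := by
  refine (norm_sum_le _ _).trans ?_
  have hterm : ∀ k, ‖x k * conj (y k)‖ ≤ R^2 := by
    intro k
    rw [norm_mul]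
    have hc : ‖conj (y k)‖ = ‖y k‖ := by
      simp
    rw [hc]
    calc ‖x k‖ * ‖y k‖
        ≤ R * R := mul_le_mul ((norm_le_pi_norm x k).trans hx)
            ((norm_le_pi_norm y k).trans hy) (norm_nonneg _) hR
      _ = R^2 := (sq R).symm
  calc ∑ k, ‖x k * conj (y k)‖ ≤ ∑ _k : Fin d, R^2 := Finset.sum_le_sum fun k _ => hterm k
    _ = d * R^2 := by simp [Finset.sum_const, Finset.card_univ, nsmul_eq_mul]

lemma main_eq (d n : ℕ) (z u v : Fin d → ℂ) :
    cUni0 d n z u * conj (cUni0 d n z v) *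
      K0 d n (fun k => (Real.sqrt n : ℂ) * z k + u k) (fun k => (Real.sqrt n : ℂ) * z k + v k)
    = (((Real.pi : ℂ))⁻¹ ^ d
        * Complex.exp (dotC u v - (((normSqC u + normSqC v : ℝ)) : ℂ) / 2))
      * (Complex.exp (-(dotC (fun k => (Real.sqrt n : ℂ) * z k + u k)
            (fun k => (Real.sqrt n : ℂ) * z k + v k)))
        * ∑ m ∈ Finset.range n, (dotC (fun k => (Real.sqrt n : ℂ) * z k + u k)
            (fun k => (Real.sqrt n : ℂ) * z k + v k)) ^ m / (Nat.factorial m : ℂ)) := by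
  unfold cUni0 K0
  rw [multi_sum]
  have hsum : (∑ k, (((Real.sqrt n : ℂ) * z k + u k)
      * conj ((Real.sqrt n : ℂ) * z k + v k)))
      = dotC (fun k => (Real.sqrt n : ℂ) * z k + u k)
          (fun k => (Real.sqrt n : ℂ) * z k + v k) := rfl
  rw [hsum]
  have h2 := cocycle_exp (Real.sqrt n) z u v
  calc Complex.exp (-(Complex.I * ((Real.sqrt n : ℝ) : ℂ) * (((dotC u z).im : ℝ) : ℂ)))
        * conj (Complex.exp (-(Complex.I * ((Real.sqrt n : ℝ) : ℂ) * (((dotC v z).im : ℝ) : ℂ))))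
        * (((Real.pi : ℂ))⁻¹ ^ d
          * Complex.exp (-(((normSqC (fun k => (Real.sqrt n : ℂ) * z k + u k)
              + normSqC (fun k => (Real.sqrt n : ℂ) * z k + v k) : ℝ)) : ℂ) / 2)
          * ∑ m ∈ Finset.range n, (dotC (fun k => (Real.sqrt n : ℂ) * z k + u k)
              (fun k => (Real.sqrt n : ℂ) * z k + v k)) ^ m / (Nat.factorial m : ℂ))
      = ((Real.pi : ℂ))⁻¹ ^ d
        * ((Complex.exp (-(Complex.I * ((Real.sqrt n : ℝ) : ℂ) * (((dotC u z).im : ℝ) : ℂ)))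
          * conj (Complex.exp (-(Complex.I * ((Real.sqrt n : ℝ) : ℂ)
              * (((dotC v z).im : ℝ) : ℂ))))
          * Complex.exp (-(((normSqC (fun k => (Real.sqrt n : ℂ) * z k + u k)
              + normSqC (fun k => (Real.sqrt n : ℂ) * z k + v k) : ℝ)) : ℂ) / 2))
          * ∑ m ∈ Finset.range n, (dotC (fun k => (Real.sqrt n : ℂ) * z k + u k)
              (fun k => (Real.sqrt n : ℂ) * z k + v k)) ^ m / (Nat.factorial m : ℂ)) := by
        ring
    _ = ((Real.pi : ℂ))⁻¹ ^ d
        * (Complex.exp ((dotC u v - (((normSqC u + normSqC v : ℝ)) : ℂ) / 2)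
            - dotC (fun k => (Real.sqrt n : ℂ) * z k + u k)
                (fun k => (Real.sqrt n : ℂ) * z k + v k))
          * ∑ m ∈ Finset.range n, (dotC (fun k => (Real.sqrt n : ℂ) * z k + u k)
              (fun k => (Real.sqrt n : ℂ) * z k + v k)) ^ m / (Nat.factorial m : ℂ)) := by
        rw [h2]
    _ = _ := by
        rw [sub_eq_add_neg, Complex.exp_add]
        ring

lemma sqrt_nat_tendsto : Tendsto (fun n : ℕ => Real.sqrt n) atTop atTop := by
  refine tendsto_atTop.2 fun b => ?_
  filter_upwards [eventually_ge_atTop (Nat.ceil (b^2))] with n hn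
  have h1 : (b^2 : ℝ) ≤ n := le_trans (Nat.le_ceil _) (by exact_mod_cast hn)
  calc b ≤ |b| := le_abs_self b
    _ = Real.sqrt (b^2) := (Real.sqrt_sq_eq_abs b).symm
    _ ≤ Real.sqrt n := Real.sqrt_le_sqrt h1

set_option maxHeartbeats 1000000 in
/-- Bulk scaling limit of the `τ = 0` model: the higher dimensional Ginibre kernel emerges,
pointwise and uniformly on compact subsets of `{|z| < 1} × ℂ^d × ℂ^d`. -/
theorem stmt_17 (d : ℕ) (hd : 1 ≤ d) :
    (∀ z : Fin d → ℂ, normSqC z < 1 → ∀ u v : Fin d → ℂ,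
      Tendsto
        (fun n : ℕ => cUni0 d n z u * conj (cUni0 d n z v) *
          K0 d n (fun k => (Real.sqrt n : ℂ) * z k + u k)
            (fun k => (Real.sqrt n : ℂ) * z k + v k))
        atTop
        (nhds (((Real.pi : ℂ))⁻¹ ^ d *
          Complex.exp (dotC u v - (((normSqC u + normSqC v : ℝ)) : ℂ) / 2)))) ∧
    ∀ K : Set ((Fin d → ℂ) × (Fin d → ℂ) × (Fin d → ℂ)),
      K ⊆ {p | normSqC p.1 < 1} → IsCompact K →
        TendstoUniformlyOn
          (fun (n : ℕ) (p : (Fin d → ℂ) × (Fin d → ℂ) × (Fin d → ℂ)) =>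
            cUni0 d n p.1 p.2.1 * conj (cUni0 d n p.1 p.2.2) *
              K0 d n (fun k => (Real.sqrt n : ℂ) * p.1 k + p.2.1 k)
                (fun k => (Real.sqrt n : ℂ) * p.1 k + p.2.2 k))
          (fun p => ((Real.pi : ℂ))⁻¹ ^ d *
            Complex.exp (dotC p.2.1 p.2.2 -
              (((normSqC p.2.1 + normSqC p.2.2 : ℝ)) : ℂ) / 2))
          atTop K := by
  have main : ∀ K : Set ((Fin d → ℂ) × (Fin d → ℂ) × (Fin d → ℂ)),
      K ⊆ {p | normSqC p.1 < 1} → IsCompact K →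
        TendstoUniformlyOn
          (fun (n : ℕ) (p : (Fin d → ℂ) × (Fin d → ℂ) × (Fin d → ℂ)) =>
            cUni0 d n p.1 p.2.1 * conj (cUni0 d n p.1 p.2.2) *
              K0 d n (fun k => (Real.sqrt n : ℂ) * p.1 k + p.2.1 k)
                (fun k => (Real.sqrt n : ℂ) * p.1 k + p.2.2 k))
          (fun p => ((Real.pi : ℂ))⁻¹ ^ d *
            Complex.exp (dotC p.2.1 p.2.2 -
              (((normSqC p.2.1 + normSqC p.2.2 : ℝ)) : ℂ) / 2))
          atTop K := by
    intro K hK1 hK2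
    rcases K.eq_empty_or_nonempty with rfl | hne
    · exact tendstoUniformlyOn_empty
    have hcontK : Continuous
        (fun p : (Fin d → ℂ) × (Fin d → ℂ) × (Fin d → ℂ) => normSqC p.1) := by
      show Continuous fun p : (Fin d → ℂ) × (Fin d → ℂ) × (Fin d → ℂ) =>
        ∑ k, Complex.normSq (p.1 k)
      exact continuous_finset_sum _ fun k _ =>
        Complex.continuous_normSq.comp ((continuous_apply k).comp continuous_fst)
    obtain ⟨p₀, hp₀K, hmax⟩ := hK2.exists_isMaxOn hne hcontK.continuousOn
    set ρ : ℝ := normSqC p₀.1 with hρdef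
    have hρ0 : 0 ≤ ρ := normSqC_nonneg _
    have hρ1 : ρ < 1 := hK1 hp₀K
    set θ : ℝ := (1 + ρ) / 2 with hθdef
    have hθ0 : 0 < θ := by simp only [hθdef]; linarith
    have hθlt : θ < 1 := by simp only [hθdef]; linarith
    have hρθ : ρ < θ := by simp only [hθdef]; linarith
    obtain ⟨R, hRK⟩ := hK2.isBounded.subset_closedBall 0
    have hR0 : 0 ≤ R := le_trans (norm_nonneg p₀) (mem_closedBall_zero_iff.1 (hRK hp₀K))
    set C : ℝ := (d : ℝ) * R ^ 2 with hCdef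
    have hC0 : 0 ≤ C := by positivity
    set ι : ℝ := 1 / θ with hιdef
    have hι0 : 0 < ι := by positivity
    have hι1 : 1 ≤ ι := by
      rw [hιdef, le_div_iff₀ hθ0]; linarith
    set Aθ : ℝ := ρ * (ι - 1) with hAdef
    set bθ : ℝ := 2 * C * (ι + 1) with hbdef
    set c0 : ℝ := C * (ι + 1) with hc0def
    set CL : ℝ := (Real.pi)⁻¹ ^ d * Real.exp C with hCLdef
    have hCL0 : 0 ≤ CL := by positivity
    set B : ℕ → ℝ := fun n => CL * Real.exp ((Aθ + Real.log θ) * n + bθ * Real.sqrt n + c0)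
      with hBdef
    have hest : ∀ n : ℕ, ∀ p ∈ K,
        dist ((fun p : (Fin d → ℂ) × (Fin d → ℂ) × (Fin d → ℂ) =>
            ((Real.pi : ℂ))⁻¹ ^ d * Complex.exp (dotC p.2.1 p.2.2 -
              (((normSqC p.2.1 + normSqC p.2.2 : ℝ)) : ℂ) / 2)) p)
          (cUni0 d n p.1 p.2.1 * conj (cUni0 d n p.1 p.2.2) *
              K0 d n (fun k => (Real.sqrt n : ℂ) * p.1 k + p.2.1 k)
                (fun k => (Real.sqrt n : ℂ) * p.1 k + p.2.2 k)) ≤ B n := by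
      intro n p hpK
      obtain ⟨z, u, v⟩ := p
      have hnormp : ‖((z, u, v) : (Fin d → ℂ) × (Fin d → ℂ) × (Fin d → ℂ))‖ ≤ R :=
        mem_closedBall_zero_iff.1 (hRK hpK)
      have hz : ‖z‖ ≤ R := by
        have h1 : ‖z‖ = ‖((z, u, v) : (Fin d → ℂ) × (Fin d → ℂ) × (Fin d → ℂ)).1‖ := rfl
        rw [h1]; exact le_trans (norm_fst_le _) hnormp
      have hu : ‖u‖ ≤ R := by
        have h1 : ‖u‖ = ‖((z, u, v) : (Fin d → ℂ) × (Fin d → ℂ) × (Fin d → ℂ)).2.1‖ := rfl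
        rw [h1]
        exact le_trans (le_trans (norm_fst_le _) (norm_snd_le _)) hnormp
      have hv : ‖v‖ ≤ R := by
        have h1 : ‖v‖ = ‖((z, u, v) : (Fin d → ℂ) × (Fin d → ℂ) × (Fin d → ℂ)).2.2‖ := rfl
        rw [h1]
        exact le_trans (le_trans (norm_snd_le _) (norm_snd_le _)) hnormp
      set S : ℝ := Real.sqrt n with hSdef
      have hS0 : 0 ≤ S := Real.sqrt_nonneg _
      set w : ℂ := dotC (fun k => (S : ℂ) * z k + u k) (fun k => (S : ℂ) * z k + v k)
        with hwdef
      set t : ℂ := (S : ℂ) * conj (dotC v z) + (S : ℂ) * dotC u z + dotC u v with htdef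
      have hw : w = (((n : ℝ) * normSqC z : ℝ) : ℂ) + t := by
        rw [hwdef, dotC_expand, ← normSqC_eq]
        have hSsq : ((S : ℝ) : ℂ) ^ 2 = ((n : ℝ) : ℂ) := by
          rw [← Complex.ofReal_pow, hSdef, Real.sq_sqrt (Nat.cast_nonneg n)]
        rw [hSsq, htdef]
        push_cast
        ring
      set nsz : ℝ := normSqC z with hnszdef
      have hnsz0 : 0 ≤ nsz := normSqC_nonneg _
      have hnszρ : nsz ≤ ρ := hmax hpK
      have hSnorm : ‖((S : ℝ) : ℂ)‖ = S := by
        rw [Complex.norm_real]; exact Real.norm_of_nonneg hS0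
      have hT : ‖t‖ ≤ 2 * C * S + C := by
        have h1 : ‖(S : ℂ) * conj (dotC v z)‖ ≤ S * C := by
          rw [norm_mul, hSnorm]
          refine mul_le_mul_of_nonneg_left ?_ hS0
          have : ‖conj (dotC v z)‖ = ‖dotC v z‖ := by
            simp
          rw [this]
          exact dotC_norm_le hv hz hR0
        have h2 : ‖(S : ℂ) * dotC u z‖ ≤ S * C := by
          rw [norm_mul, hSnorm]
          exact mul_le_mul_of_nonneg_left (dotC_norm_le hu hz hR0) hS0
        have h3 : ‖dotC u v‖ ≤ C := dotC_norm_le hu hv hR0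
        calc ‖t‖ ≤ ‖(S : ℂ) * conj (dotC v z) + (S : ℂ) * dotC u z‖ + ‖dotC u v‖ :=
              norm_add_le _ _
          _ ≤ (‖(S : ℂ) * conj (dotC v z)‖ + ‖(S : ℂ) * dotC u z‖) + ‖dotC u v‖ := by
              gcongr; exact norm_add_le _ _
          _ ≤ (S * C + S * C) + C := by gcongr
          _ = 2 * C * S + C := by ring
      set T : ℝ := ‖t‖ with hTdef
      have hT0 : 0 ≤ T := norm_nonneg _
      have hwnorm : ‖w‖ ≤ (n : ℝ) * nsz + T := by
        rw [hw]
        refine (norm_add_le _ _).trans ?_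
        rw [Complex.norm_real, Real.norm_of_nonneg (mul_nonneg (Nat.cast_nonneg n) hnsz0)]
      have hwre : (n : ℝ) * nsz - T ≤ w.re := by
        have ht_re : -T ≤ t.re := by
          have := Complex.abs_re_le_norm t
          linarith [(abs_le.1 this).1]
        rw [hw]
        simp only [Complex.add_re, Complex.ofReal_re]
        linarith
      have hexp_arg : ‖w‖ / θ - w.re ≤ Aθ * n + bθ * S + c0 := by
        rw [div_eq_mul_one_div, ← hιdef]
        have k1 : ‖w‖ * ι ≤ ((n : ℝ) * nsz + T) * ι :=
          mul_le_mul_of_nonneg_right hwnorm hι0.le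
        have k2 : (n : ℝ) * nsz * (ι - 1) ≤ (n : ℝ) * ρ * (ι - 1) := by
          have := mul_le_mul_of_nonneg_left hnszρ (Nat.cast_nonneg n : (0:ℝ) ≤ n)
          exact mul_le_mul_of_nonneg_right this (by linarith)
        have k3 : T * (ι + 1) ≤ (2 * C * S + C) * (ι + 1) :=
          mul_le_mul_of_nonneg_right hT (by linarith)
        rw [hAdef, hbdef, hc0def]
        nlinarith [k1, k2, k3, hwre]
      have hE := E_bound w θ hθ0 hθlt.le n
      have hθpow : θ ^ n = Real.exp ((n : ℝ) * Real.log θ) := by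
        rw [Real.exp_nat_mul, Real.exp_log hθ0]
      have hEb : ‖Complex.exp (-w) * (∑ m ∈ Finset.range n, w ^ m / (Nat.factorial m : ℂ))
          - 1‖ ≤ Real.exp ((Aθ + Real.log θ) * n + bθ * S + c0) := by
        refine hE.trans ?_
        rw [hθpow, ← Real.exp_add]
        refine Real.exp_le_exp.2 ?_
        have := hexp_arg
        linarith
      have hLim : ‖((Real.pi : ℂ))⁻¹ ^ d * Complex.exp (dotC u v -
          (((normSqC u + normSqC v : ℝ)) : ℂ) / 2)‖ ≤ CL := by
        rw [norm_mul, norm_pow, norm_inv]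
        have hπ : ‖((Real.pi : ℝ) : ℂ)‖ = Real.pi := by
          rw [Complex.norm_real]; exact Real.norm_of_nonneg Real.pi_pos.le
        rw [hπ]
        have hXeq : dotC u v - (((normSqC u + normSqC v : ℝ)) : ℂ) / 2
            = dotC u v - (((normSqC u + normSqC v) / 2 : ℝ) : ℂ) := by
          push_cast; ring
        rw [hXeq]
        have hre : (dotC u v - (((normSqC u + normSqC v) / 2 : ℝ) : ℂ)).re
            = (dotC u v).re - (normSqC u + normSqC v) / 2 := by
          simp [Complex.sub_re, Complex.ofReal_re]
        have hexpnorm : ‖Complex.exp (dotC u v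
            - (((normSqC u + normSqC v) / 2 : ℝ) : ℂ))‖ ≤ Real.exp C := by
          rw [Complex.norm_exp, hre]
          refine Real.exp_le_exp.2 ?_
          have h1 : (dotC u v).re ≤ ‖dotC u v‖ := by
            exact Complex.re_le_norm _
          have h2 : ‖dotC u v‖ ≤ C := dotC_norm_le hu hv hR0
          have h3 : 0 ≤ normSqC u := normSqC_nonneg _
          have h4 : 0 ≤ normSqC v := normSqC_nonneg _
          linarith
        rw [hCLdef]
        exact mul_le_mul_of_nonneg_left hexpnorm (by positivity)
      rw [dist_eq_norm]
      have heq := main_eq d n z u v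
      simp only at heq ⊢
      rw [heq]
      set L : ℂ := ((Real.pi : ℂ))⁻¹ ^ d * Complex.exp (dotC u v -
          (((normSqC u + normSqC v : ℝ)) : ℂ) / 2) with hLdef
      set E : ℂ := Complex.exp (-w) *
          ∑ m ∈ Finset.range n, w ^ m / (Nat.factorial m : ℂ) with hEdef
      have hfact : L - L * E = L * (1 - E) := by ring
      rw [hfact, norm_mul, norm_sub_rev]
      rw [hBdef]
      calc ‖L‖ * ‖E - 1‖ ≤ CL * Real.exp ((Aθ + Real.log θ) * n + bθ * S + c0) := by
            exact mul_le_mul hLim hEb (norm_nonneg _) hCL0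
        _ = CL * Real.exp ((Aθ + Real.log θ) * n + bθ * Real.sqrt n + c0) := by rw [hSdef]
    have hγ : Aθ + Real.log θ < 0 := by
      have hlog := Real.log_lt_sub_one_of_pos hθ0 (ne_of_lt hθlt)
      have h6 : ρ * (ι - 1) ≤ 1 - θ := by
        rw [hιdef]
        have h7 : ρ * (1 / θ - 1) = ρ * (1 - θ) / θ := by field_simp
        rw [h7]
        rw [div_le_iff₀ hθ0]
        nlinarith
      rw [hAdef]
      linarith
    have hBtendsto : Tendsto B atTop (nhds 0) := by
      have hlin : Tendsto (fun n : ℕ => (Aθ + Real.log θ) * n + bθ * Real.sqrt n + c0)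
          atTop atBot := by
        have hinner : Tendsto (fun n : ℕ => (Aθ + Real.log θ) * Real.sqrt n + bθ)
            atTop atBot :=
          tendsto_atBot_add_const_right _ bθ (sqrt_nat_tendsto.const_mul_atTop_of_neg hγ)
        have hprod : Tendsto (fun n : ℕ =>
            Real.sqrt n * ((Aθ + Real.log θ) * Real.sqrt n + bθ) + c0) atTop atBot :=
          tendsto_atBot_add_const_right _ c0 (sqrt_nat_tendsto.atTop_mul_atBot₀ hinner)
        refine hprod.congr fun n => ?_
        have hss : Real.sqrt n * Real.sqrt n = (n : ℝ) :=
          Real.mul_self_sqrt (Nat.cast_nonneg n)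
        nlinarith [hss]
      have := (Real.tendsto_exp_atBot.comp hlin).const_mul CL
      simpa [hBdef, Function.comp] using this
    rw [Metric.tendstoUniformlyOn_iff]
    intro ε hε
    have hev : ∀ᶠ n in atTop, B n < ε := hBtendsto.eventually (gt_mem_nhds hε)
    filter_upwards [hev] with n hn p hp
    exact lt_of_le_of_lt (hest n p hp) hn
  refine ⟨?_, main⟩
  intro z hz u v
  have hsub : ({((z, u, v))} : Set ((Fin d → ℂ) × (Fin d → ℂ) × (Fin d → ℂ)))
      ⊆ {p | normSqC p.1 < 1} := by
    rintro p hp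
    rw [Set.mem_singleton_iff] at hp
    subst hp
    exact hz
  have huni := main {(z, u, v)} hsub isCompact_singleton
  have h2 := huni.tendsto_at
    (Set.mem_singleton ((z, u, v) : (Fin d → ℂ) × (Fin d → ℂ) × (Fin d → ℂ)))
  simp only at h2
  exact h2
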